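/- Classical RAC success metric with unbounded messages equals the stated max formula and satisfies the dimension bound: for n = 2 and any encoding, S ≤ (1 + D)/2 where D is the distinguishability; hence achieving S = (1/2)(1 + 1/√d) requires D ≥ 1/√d. -/

import Mathlib

open Finset

theorem rac_n2_bound
    (d : ℕ) (hd : 2 ≤ d)
    (M : Type*) [Fintype M]
    (p : M → (Fin 2 → Fin d) → ℝ)
    (hp : ∀ m x, 0 ≤ p m x) (hsum : ∀ x, ∑ m, p m x = 1)
    (S D : ℝ)
    (hS : haveI : Nonempty (Fin d) := Fin.pos_iff_nonempty.mp (by omega)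
      S = (1 / (2 * (d : ℝ) ^ 2)) * ∑ m, ∑ y : Fin 2,
        Finset.univ.sup' Finset.univ_nonempty
          (fun v : Fin d => ∑ x ∈ Finset.univ.filter (fun x : Fin 2 → Fin d => x y = v), p m x))
    (hD : haveI : Nonempty (Fin 2 → Fin d) := ⟨fun _ => ⟨0, by omega⟩⟩
      D = (1 / (d : ℝ) ^ 2) * ∑ m, Finset.univ.sup' Finset.univ_nonempty (p m)) :
    2 * S - 1 ≤ D ∧ (S = (1 / 2) * (1 + 1 / Real.sqrt d) → 1 / Real.sqrt d ≤ D) := by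
  haveI hne : Nonempty (Fin d) := Fin.pos_iff_nonempty.mp (by omega)
  haveI hne2 : Nonempty (Fin 2 → Fin d) := ⟨fun _ => ⟨0, by omega⟩⟩
  have hdpos : (0:ℝ) < (d:ℝ)^2 := by
    have : (0:ℝ) < (d:ℝ) := by exact_mod_cast Nat.lt_of_lt_of_le (by norm_num) hd
    positivity
  have key : ∀ m : M, (∑ y : Fin 2,
      Finset.univ.sup' Finset.univ_nonempty
        (fun v : Fin d => ∑ x ∈ Finset.univ.filter (fun x : Fin 2 → Fin d => x y = v), p m x))
      ≤ (∑ x, p m x) + Finset.univ.sup' Finset.univ_nonempty (p m) := by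
    intro m
    rw [Fin.sum_univ_two]
    obtain ⟨v, -, hv⟩ := Finset.exists_mem_eq_sup' (Finset.univ_nonempty)
      (fun v : Fin d => ∑ x ∈ Finset.univ.filter (fun x : Fin 2 → Fin d => x 0 = v), p m x)
    obtain ⟨w, -, hw⟩ := Finset.exists_mem_eq_sup' (Finset.univ_nonempty)
      (fun v : Fin d => ∑ x ∈ Finset.univ.filter (fun x : Fin 2 → Fin d => x 1 = v), p m x)
    rw [hv, hw]
    set g : Fin 2 → Fin d := ![v, w] with hg
    have hinter : (Finset.univ.filter (fun x : Fin 2 → Fin d => x 0 = v)) ∩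
        (Finset.univ.filter (fun x : Fin 2 → Fin d => x 1 = w)) = {g} := by
      ext x
      simp only [Finset.mem_inter, Finset.mem_filter, Finset.mem_univ, true_and,
        Finset.mem_singleton]
      constructor
      · rintro ⟨h0, h1⟩
        funext y
        fin_cases y <;> simp [g, h0, h1]
      · rintro rfl
        simp [g]
    have hie := Finset.sum_union_inter
      (s₁ := Finset.univ.filter (fun x : Fin 2 → Fin d => x 0 = v))
      (s₂ := Finset.univ.filter (fun x : Fin 2 → Fin d => x 1 = w)) (f := p m)
    rw [hinter, Finset.sum_singleton] at hie
    have h1 := Finset.sum_le_sum_of_subset_of_nonneg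
      (Finset.subset_univ ((Finset.univ.filter (fun x : Fin 2 → Fin d => x 0 = v)) ∪
        (Finset.univ.filter (fun x : Fin 2 → Fin d => x 1 = w))))
      (fun x _ _ => hp m x)
    have h2 : p m g ≤ Finset.univ.sup' Finset.univ_nonempty (p m) :=
      Finset.le_sup' _ (Finset.mem_univ g)
    linarith
  have hsum2 : ∑ m, ∑ x : Fin 2 → Fin d, p m x = (d:ℝ)^2 := by
    rw [Finset.sum_comm]
    simp only [hsum, Finset.sum_const, Finset.card_univ, nsmul_eq_mul, mul_one]
    rw [Fintype.card_fun]
    push_cast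
    simp
  have hDsum : ∑ m, Finset.univ.sup' Finset.univ_nonempty (p m) = (d:ℝ)^2 * D := by
    rw [hD]; field_simp
  have hT : ∑ m, (∑ y : Fin 2,
      Finset.univ.sup' Finset.univ_nonempty
        (fun v : Fin d => ∑ x ∈ Finset.univ.filter (fun x : Fin 2 → Fin d => x y = v), p m x))
      ≤ (d:ℝ)^2 + (d:ℝ)^2 * D := by
    calc _ ≤ ∑ m, ((∑ x, p m x) + Finset.univ.sup' Finset.univ_nonempty (p m)) :=
          Finset.sum_le_sum (fun m _ => key m)
      _ = (d:ℝ)^2 + (d:ℝ)^2 * D := by rw [Finset.sum_add_distrib, hsum2, hDsum]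
  have hfirst : 2 * S - 1 ≤ D := by
    rw [hS, sub_le_iff_le_add]
    rw [show (2:ℝ) * (1 / (2 * (d:ℝ)^2) * (∑ m, ∑ y : Fin 2,
      Finset.univ.sup' Finset.univ_nonempty
        (fun v : Fin d => ∑ x ∈ Finset.univ.filter (fun x : Fin 2 → Fin d => x y = v), p m x)))
      = (∑ m, ∑ y : Fin 2,
      Finset.univ.sup' Finset.univ_nonempty
        (fun v : Fin d => ∑ x ∈ Finset.univ.filter (fun x : Fin 2 → Fin d => x y = v), p m x))
        / (d:ℝ)^2 from by field_simp, div_le_iff₀ hdpos]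
    nlinarith [hT]
  refine ⟨hfirst, fun hval => ?_⟩
  rw [hval] at hfirst
  linarith
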